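/- Shift property of the QWLCT: for a translation T_r f(x) = f(x − r) with r = (r₁, r₂) ∈ ℝ², G^{A₁,A₂}_φ{T_r f}(w, u) = e^{i r₁ω₁c₁} e^{−i (a₁r₁²/2)c₁} G^{A₁,A₂}_φ{f}(m, n) e^{j r₂ω₂c₂} e^{−j (a₂r₂²/2)c₂}, where m_i = w_i − a_i r_i and n_i = u_i − r_i for i = 1, 2. -/

import Mathlib

open MeasureTheory Real

noncomputable section

abbrev ℍ := Quaternion ℝ

def Qi : ℍ := ⟨0, 1, 0, 0⟩
def Qj : ℍ := ⟨0, 0, 1, 0⟩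

/-- Quaternion exponential. -/
def qexp (q : ℍ) : ℍ := NormedSpace.exp q

/-- The kernel `K_{A₁}^{i}(x, ω)` of the QLCT (case `b ≠ 0`). -/
def K1 (a b d : ℝ) (x ω : ℝ) : ℍ :=
  (1 / Real.sqrt (2 * π * b)) •
    qexp ((a / (2 * b) * x ^ 2 - x * ω / b + d / (2 * b) * ω ^ 2 - π / 4) • Qi)

/-- The kernel `K_{A₂}^{j}(x, ω)` of the QLCT (case `b ≠ 0`). -/
def K2 (a b d : ℝ) (x ω : ℝ) : ℍ :=
  (1 / Real.sqrt (2 * π * b)) •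
    qexp ((a / (2 * b) * x ^ 2 - x * ω / b + d / (2 * b) * ω ^ 2 - π / 4) • Qj)

/-- The two-sided quaternion windowed linear canonical transform. -/
def QWLCT (a₁ b₁ d₁ a₂ b₂ d₂ : ℝ) (φ f : ℝ × ℝ → ℍ) (w u : ℝ × ℝ) : ℍ :=
  ∫ x : ℝ × ℝ, K1 a₁ b₁ d₁ x.1 w.1 * f x * star (φ (x - u)) * K2 a₂ b₂ d₂ x.2 w.2

/-- Euclidean norm on `ℝ × ℝ`. -/
def nrm (x : ℝ × ℝ) : ℝ := Real.sqrt (x.1 ^ 2 + x.2 ^ 2)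

lemma qexp_add_Qi (s t : ℝ) : qexp (s • Qi) * qexp (t • Qi) = qexp ((s + t) • Qi) := by
  rw [qexp, qexp, qexp,
    ← NormedSpace.exp_add_of_commute_of_mem_ball (𝕂 := ℝ) (((Commute.refl Qi).smul_left s).smul_right t)
      ((NormedSpace.expSeries_radius_eq_top ℝ ℍ).symm ▸ edist_lt_top _ _)
      ((NormedSpace.expSeries_radius_eq_top ℝ ℍ).symm ▸ edist_lt_top _ _), add_smul]

lemma qexp_add_Qj (s t : ℝ) : qexp (s • Qj) * qexp (t • Qj) = qexp ((s + t) • Qj) := by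
  rw [qexp, qexp, qexp,
    ← NormedSpace.exp_add_of_commute_of_mem_ball (𝕂 := ℝ) (((Commute.refl Qj).smul_left s).smul_right t)
      ((NormedSpace.expSeries_radius_eq_top ℝ ℍ).symm ▸ edist_lt_top _ _)
      ((NormedSpace.expSeries_radius_eq_top ℝ ℍ).symm ▸ edist_lt_top _ _), add_smul]

lemma exponent_shift (a b c d : ℝ) (h : a * d - b * c = 1) (hb : b ≠ 0) (x r w : ℝ) :
    r * w * c + -(a * r ^ 2 / 2 * c) +
      (a / (2 * b) * x ^ 2 - x * (w - a * r) / b + d / (2 * b) * (w - a * r) ^ 2 - π / 4)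
    = a / (2 * b) * (x + r) ^ 2 - (x + r) * w / b + d / (2 * b) * w ^ 2 - π / 4 := by
  have hc : c = (a * d - 1) / b := by field_simp; linarith
  subst hc
  field_simp
  ring

lemma K1_shift (a b c d : ℝ) (h : a * d - b * c = 1) (hb : b ≠ 0) (x r w : ℝ) :
    K1 a b d (x + r) w =
      qexp ((r * w * c) • Qi) * qexp ((-(a * r ^ 2 / 2 * c)) • Qi) * K1 a b d x (w - a * r) := by
  rw [K1, K1, qexp_add_Qi, mul_smul_comm, qexp_add_Qi, exponent_shift a b c d h hb x r w]

lemma K2_shift (a b c d : ℝ) (h : a * d - b * c = 1) (hb : b ≠ 0) (x r w : ℝ) :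
    K2 a b d (x + r) w =
      K2 a b d x (w - a * r) * (qexp ((r * w * c) • Qj) * qexp ((-(a * r ^ 2 / 2 * c)) • Qj)) := by
  rw [K2, K2, qexp_add_Qj, smul_mul_assoc, qexp_add_Qj]
  rw [show a / (2 * b) * x ^ 2 - x * (w - a * r) / b + d / (2 * b) * (w - a * r) ^ 2 - π / 4 +
      (r * w * c + -(a * r ^ 2 / 2 * c)) =
      r * w * c + -(a * r ^ 2 / 2 * c) +
      (a / (2 * b) * x ^ 2 - x * (w - a * r) / b + d / (2 * b) * (w - a * r) ^ 2 - π / 4) from by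
        ring,
    exponent_shift a b c d h hb x r w]

lemma integral_qmul_left (c : ℍ) (f : ℝ × ℝ → ℍ) : (∫ x, c * f x) = c * ∫ x, f x := by
  rcases eq_or_ne c 0 with rfl | hc
  · simp
  · let L : ℍ ≃L[ℝ] ℍ :=
      { toFun := fun x => c * x
        invFun := fun x => c⁻¹ * x
        map_add' := mul_add c
        map_smul' := fun s x => by simp [mul_smul_comm]
        left_inv := fun x => by
          show c⁻¹ * (c * x) = x; rw [← mul_assoc, inv_mul_cancel₀ hc, one_mul]
        right_inv := fun x => by
          show c * (c⁻¹ * x) = x; rw [← mul_assoc, mul_inv_cancel₀ hc, one_mul]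
        continuous_toFun := continuous_const.mul continuous_id
        continuous_invFun := continuous_const.mul continuous_id }
    exact L.integral_comp_comm f

lemma integral_qmul_right (c : ℍ) (f : ℝ × ℝ → ℍ) : (∫ x, f x * c) = (∫ x, f x) * c := by
  rcases eq_or_ne c 0 with rfl | hc
  · simp
  · let L : ℍ ≃L[ℝ] ℍ :=
      { toFun := fun x => x * c
        invFun := fun x => x * c⁻¹
        map_add' := fun x y => add_mul x y c
        map_smul' := fun s x => by simp [smul_mul_assoc]
        left_inv := fun x => by
          show x * c * c⁻¹ = x; rw [mul_assoc, mul_inv_cancel₀ hc, mul_one]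
        right_inv := fun x => by
          show x * c⁻¹ * c = x; rw [mul_assoc, inv_mul_cancel₀ hc, mul_one]
        continuous_toFun := continuous_id.mul continuous_const
        continuous_invFun := continuous_id.mul continuous_const }
    exact L.integral_comp_comm f

/-- Shift property of the QWLCT. -/
theorem qwlct_shift (a₁ b₁ c₁ d₁ a₂ b₂ c₂ d₂ : ℝ)
    (hA₁ : a₁ * d₁ - b₁ * c₁ = 1) (hA₂ : a₂ * d₂ - b₂ * c₂ = 1)
    (hb₁ : b₁ ≠ 0) (hb₂ : b₂ ≠ 0)
    (φ f : ℝ × ℝ → ℍ) (hφ : MemLp φ 2 (volume : Measure (ℝ × ℝ))) (hφ0 : φ ≠ 0)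
    (hf : MemLp f 2 (volume : Measure (ℝ × ℝ))) (r w u : ℝ × ℝ) :
    QWLCT a₁ b₁ d₁ a₂ b₂ d₂ φ (fun x => f (x - r)) w u =
      qexp ((r.1 * w.1 * c₁) • Qi) * qexp ((-(a₁ * r.1 ^ 2 / 2 * c₁)) • Qi) *
        QWLCT a₁ b₁ d₁ a₂ b₂ d₂ φ f (w.1 - a₁ * r.1, w.2 - a₂ * r.2) (u.1 - r.1, u.2 - r.2) *
        (qexp ((r.2 * w.2 * c₂) • Qj) * qexp ((-(a₂ * r.2 ^ 2 / 2 * c₂)) • Qj)) := by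
  set E1 : ℍ := qexp ((r.1 * w.1 * c₁) • Qi) * qexp ((-(a₁ * r.1 ^ 2 / 2 * c₁)) • Qi) with hE1
  set E2 : ℍ := qexp ((r.2 * w.2 * c₂) • Qj) * qexp ((-(a₂ * r.2 ^ 2 / 2 * c₂)) • Qj) with hE2
  have hsub : QWLCT a₁ b₁ d₁ a₂ b₂ d₂ φ (fun x => f (x - r)) w u
      = ∫ x : ℝ × ℝ, K1 a₁ b₁ d₁ (x.1 + r.1) w.1 * f x * star (φ (x - (u - r))) *
          K2 a₂ b₂ d₂ (x.2 + r.2) w.2 := by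
    rw [QWLCT, ← integral_add_right_eq_self (μ := volume)
      (fun x : ℝ × ℝ => K1 a₁ b₁ d₁ x.1 w.1 * f (x - r) * star (φ (x - u)) *
        K2 a₂ b₂ d₂ x.2 w.2) r]
    congr 1
    funext x
    simp only [Prod.fst_add, Prod.snd_add, add_sub_cancel_right]
    rw [show x + r - u = x - (u - r) from by abel]
  rw [hsub]
  have hker : ∀ x : ℝ × ℝ,
      K1 a₁ b₁ d₁ (x.1 + r.1) w.1 * f x * star (φ (x - (u - r))) *
        K2 a₂ b₂ d₂ (x.2 + r.2) w.2
      = E1 * (K1 a₁ b₁ d₁ x.1 (w.1 - a₁ * r.1) * f x * star (φ (x - (u - r))) *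
          K2 a₂ b₂ d₂ x.2 (w.2 - a₂ * r.2) * E2) := by
    intro x
    rw [K1_shift a₁ b₁ c₁ d₁ hA₁ hb₁, K2_shift a₂ b₂ c₂ d₂ hA₂ hb₂, hE1, hE2]
    simp only [mul_assoc]
  simp only [hker]
  rw [integral_qmul_left, integral_qmul_right, QWLCT]
  have hu : ((u.1 - r.1, u.2 - r.2) : ℝ × ℝ) = u - r := rfl
  simp only [hu, mul_assoc]
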